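/- Let t ∈ ℕ, let Q be a set of connected X-labeled graphs, and let H ∈ mpcs_{+t}(Q). Then either H contains a boundary vertex, or H ∈ ext_t(Q). -/

import Mathlib

open SimpleGraph Set

def IsMinorModel {α β : Type*} (G : SimpleGraph α) (H : SimpleGraph β)
    (φ : β → Set α) : Prop :=
  (∀ w, (φ w).Nonempty) ∧
  (∀ w, (G.induce (φ w)).Connected) ∧
  (∀ w w', w ≠ w' → Disjoint (φ w) (φ w')) ∧
  (∀ w w', H.Adj w w' → ∃ a ∈ φ w, ∃ b ∈ φ w', G.Adj a b)

def within {α : Type*} (G : SimpleGraph α) (A : Set α) : SimpleGraph α where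
  Adj a b := a ∈ A ∧ b ∈ A ∧ G.Adj a b
  symm := ⟨fun a b ⟨ha, hb, h⟩ => ⟨hb, ha, h.symm⟩⟩
  loopless := ⟨fun a ⟨_, _, h⟩ => G.irrefl h⟩

def compIn {α : Type*} (G : SimpleGraph α) (A : Set α) (a : α) : Set α :=
  {b | b ∈ A ∧ (within G A).Reachable a b}

/-- An `X`-labeled `t`-boundaried graph: a graph with labelsets from `X` and an
injective (partial) boundary index function into `Fin t`. -/
structure BLGraph (X : Type) (t : ℕ) where
  V : Type
  G : SimpleGraph V
  lab : V → Set X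
  bd : V → Option (Fin t)
  inj : ∀ a b i, bd a = some i → bd b = some i → a = b

namespace BLGraph

variable {X : Type} {t : ℕ}

/-- Vertices of the glued graph `G₁ ⊕ G₂`: all of `G₁`, plus the vertices of `G₂`
whose boundary index (if any) does not occur in `G₁`. -/
def glueV (G₁ G₂ : BLGraph X t) : Type :=
  G₁.V ⊕ {b : G₂.V // ∀ i, G₂.bd b = some i → ∀ a, G₁.bd a ≠ some i}

/-- The canonical map of `G₂` into the glued graph. -/
noncomputable def emb2 (G₁ G₂ : BLGraph X t) (b : G₂.V) : glueV G₁ G₂ :=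
  letI : Decidable (∃ i, G₂.bd b = some i ∧ ∃ a, G₁.bd a = some i) :=
    Classical.propDecidable _
  if h : ∃ i, G₂.bd b = some i ∧ ∃ a, G₁.bd a = some i
  then Sum.inl h.choose_spec.2.choose
  else Sum.inr ⟨b, fun i hi a ha => h ⟨i, hi, a, ha⟩⟩

/-- The gluing operation `G₁ ⊕ G₂`, identifying boundary vertices carrying equal
indices and unioning labelsets. -/
noncomputable def glue (G₁ G₂ : BLGraph X t) : BLGraph X t where
  V := glueV G₁ G₂
  G := SimpleGraph.fromRel (fun x y =>
    (∃ a b, x = Sum.inl a ∧ y = Sum.inl b ∧ G₁.G.Adj a b) ∨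
    (∃ a b, x = emb2 G₁ G₂ a ∧ y = emb2 G₁ G₂ b ∧ G₂.G.Adj a b))
  lab x := {ℓ | (∃ a, x = Sum.inl a ∧ ℓ ∈ G₁.lab a) ∨
    (∃ b, x = emb2 G₁ G₂ b ∧ ℓ ∈ G₂.lab b)}
  bd := Sum.elim G₁.bd (fun b => G₂.bd b.1)
  inj := by
    rintro (a | a) (b | b) i ha hb
    · exact congrArg Sum.inl (G₁.inj a b i ha hb)
    · exact absurd ha (b.2 i hb a)
    · exact absurd hb (a.2 i ha b)
    · exact congrArg Sum.inr (Subtype.ext (G₂.inj _ _ i ha hb))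

/-- A boundaried labeled minor model of the pattern `P` in the host `H`. -/
def BMinorModel (P H : BLGraph X t) (φ : P.V → Set H.V) : Prop :=
  IsMinorModel H.G P.G φ ∧
  (∀ w, ∀ ℓ ∈ P.lab w, ∃ a ∈ φ w, ℓ ∈ H.lab a) ∧
  (∀ w a, a ∈ φ w → ∀ i, H.bd a = some i → P.bd w = some i) ∧
  (∀ w i, P.bd w = some i → ∃ a ∈ φ w, H.bd a = some i)

/-- `P` is a boundaried labeled minor of `H`. -/
def BMinor (P H : BLGraph X t) : Prop := ∃ φ, BMinorModel P H φ

/-- Piece: a single boundary vertex, with no labels. -/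
def pieceBd (H : BLGraph X t) (a : H.V) : BLGraph X t where
  V := PUnit
  G := ⊥
  lab _ := ∅
  bd _ := H.bd a
  inj := fun x y _ _ _ => Subsingleton.elim x y

/-- Piece: a single boundary vertex carrying one of its labels. -/
def pieceLab (H : BLGraph X t) (a : H.V) (ℓ : X) : BLGraph X t where
  V := PUnit
  G := ⊥
  lab _ := {ℓ}
  bd _ := H.bd a
  inj := fun x y _ _ _ => Subsingleton.elim x y

/-- Piece: a single edge between two boundary vertices, with no labels. -/
def pieceEdge (H : BLGraph X t) (a b : H.V) (hne : a ≠ b) : BLGraph X t where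
  V := Bool
  G := SimpleGraph.fromRel (fun x y => x = true ∧ y = false)
  lab _ := ∅
  bd x := cond x (H.bd a) (H.bd b)
  inj := by
    intro x y i hx hy
    cases x <;> cases y
    · rfl
    · exact absurd (H.inj b a i hx hy) fun h => hne h.symm
    · exact absurd (H.inj a b i hx hy) hne
    · rfl

/-- Piece: a connected component `C` of `H` minus its boundary (the component of a
non-boundary vertex `c`), together with its boundary neighbors, with
boundary-boundary edges removed and boundary labels erased. -/
def pieceComp (H : BLGraph X t) (c : H.V) : BLGraph X t where
  V := {x : H.V // x ∈ compIn H.G {y | H.bd y = none} c ∨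
        (H.bd x ≠ none ∧ ∃ y ∈ compIn H.G {y | H.bd y = none} c, H.G.Adj x y)}
  G := SimpleGraph.fromRel
    (fun x y => H.G.Adj x.1 y.1 ∧ (H.bd x.1 = none ∨ H.bd y.1 = none))
  lab x := {ℓ | H.bd x.1 = none ∧ ℓ ∈ H.lab x.1}
  bd x := H.bd x.1
  inj := fun x y i hx hy => Subtype.ext (H.inj _ _ i hx hy)

/-- The pieces of a boundaried labeled graph. -/
def pcs (H : BLGraph X t) : Set (BLGraph X t) :=
  {P | (∃ a, H.bd a ≠ none ∧ P = pieceBd H a) ∨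
       (∃ a ℓ, H.bd a ≠ none ∧ ℓ ∈ H.lab a ∧ P = pieceLab H a ℓ) ∨
       (∃ a b, ∃ hne : a ≠ b, H.bd a ≠ none ∧ H.bd b ≠ none ∧ H.G.Adj a b ∧
          P = pieceEdge H a b hne) ∨
       (∃ c, H.bd c = none ∧ P = pieceComp H c)}

/-- The `⊕`-sum of a nonempty list of boundaried labeled graphs. -/
noncomputable def glueList : BLGraph X t → List (BLGraph X t) → BLGraph X t
  | H, [] => H
  | H, P :: l => glue H (glueList P l)

/-- The multipieces of `H`: all `⊕`-sums of nonempty sets of pieces of `H`. -/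
def mpcs (H : BLGraph X t) : Set (BLGraph X t) :=
  {K | ∃ (P : BLGraph X t) (l : List (BLGraph X t)),
    (∀ p ∈ P :: l, p ∈ pcs H) ∧ (P :: l).Nodup ∧ K = glueList P l}

/-- Shift all boundary indices of a `t`-boundaried graph into `Fin (t+1)`
(the "do nothing" extension step). -/
def bumpBd (H : BLGraph X t) : BLGraph X (t+1) where
  V := H.V
  G := H.G
  lab := H.lab
  bd a := (H.bd a).map Fin.castSucc
  inj := by
    intro a b i ha hb
    obtain ⟨j, hj, hj2⟩ := Option.map_eq_some_iff.mp ha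
    obtain ⟨j', hj', hj'2⟩ := Option.map_eq_some_iff.mp hb
    have : j' = j := Fin.castSucc_injective _ (hj'2.trans hj2.symm)
    subst this
    exact H.inj a b j' hj hj'

/-- Extension step "increase the boundary": give a non-boundary vertex `v` the new
index `t+1`. -/
noncomputable def raiseBd (H : BLGraph X t) (v : H.V) : BLGraph X (t+1) :=
  letI := Classical.decEq H.V
  { V := H.V
    G := H.G
    lab := H.lab
    bd := fun a => if a = v then some (Fin.last t) else (H.bd a).map Fin.castSucc
    inj := by
      intro a b i ha hb
      split_ifs at ha hb with h1 h2 h2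
      · exact h1.trans h2.symm
      · obtain ⟨j, hj, hj2⟩ := Option.map_eq_some_iff.mp hb
        have : i = Fin.last t := (Option.some_injective _ ha).symm
        exact absurd (hj2.trans this) (Fin.castSucc_lt_last j).ne
      · obtain ⟨j, hj, hj2⟩ := Option.map_eq_some_iff.mp ha
        have : i = Fin.last t := (Option.some_injective _ hb).symm
        exact absurd (hj2.trans this) (Fin.castSucc_lt_last j).ne
      · obtain ⟨j, hj, hj2⟩ := Option.map_eq_some_iff.mp ha
        obtain ⟨j', hj', hj'2⟩ := Option.map_eq_some_iff.mp hb
        have : j' = j := Fin.castSucc_injective _ (hj'2.trans hj2.symm)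
        subst this
        exact H.inj a b j' hj hj' }

/-- Extension step "split": split a boundary vertex `u` into `u` and a new vertex
with index `t+1` joined to `u` by an edge; the edges from `u` to the vertices of
`S` move to the new vertex, and the labels in `K` move to the new vertex. -/
noncomputable def splitBd (H : BLGraph X t) (u : H.V) (S : Set H.V) (K : Set X) :
    BLGraph X (t+1) :=
  letI := Classical.decEq H.V
  { V := H.V ⊕ Unit
    G := SimpleGraph.fromRel (fun x y =>
      match x, y with
      | .inl a, .inl b => H.G.Adj a b ∧ ¬(b = u ∧ a ∈ S) ∧ ¬(a = u ∧ b ∈ S)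
      | .inl a, .inr _ => (H.G.Adj a u ∧ a ∈ S) ∨ a = u
      | _, _ => False)
    lab := Sum.elim (fun a => if a = u then H.lab a \ K else H.lab a)
      (fun _ => K ∩ H.lab u)
    bd := Sum.elim (fun a => (H.bd a).map Fin.castSucc) (fun _ => some (Fin.last t))
    inj := by
      rintro (a | a) (b | b) i ha hb
      · obtain ⟨j, hj, hj2⟩ := Option.map_eq_some_iff.mp ha
        obtain ⟨j', hj', hj'2⟩ := Option.map_eq_some_iff.mp hb
        have : j' = j := Fin.castSucc_injective _ (hj'2.trans hj2.symm)
        subst this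
        exact congrArg Sum.inl (H.inj a b j' hj hj')
      · obtain ⟨j, hj, hj2⟩ := Option.map_eq_some_iff.mp ha
        have : i = Fin.last t := (Option.some_injective _ hb).symm
        exact absurd (hj2.trans this) (Fin.castSucc_lt_last j).ne
      · obtain ⟨j, hj, hj2⟩ := Option.map_eq_some_iff.mp hb
        have : i = Fin.last t := (Option.some_injective _ ha).symm
        exact absurd (hj2.trans this) (Fin.castSucc_lt_last j).ne
      · exact congrArg Sum.inr rfl }

/-- The single-step extension `ext₁` of a boundaried labeled graph. -/
def ext1 (H : BLGraph X t) : Set (BLGraph X (t+1)) :=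
  {K | K = bumpBd H ∨
       (∃ v, H.bd v = none ∧ K = raiseBd H v) ∨
       (∃ u S Kl, H.bd u ≠ none ∧ S ⊆ {a | H.G.Adj a u} ∧ Kl ⊆ H.lab u ∧
          K = splitBd H u S Kl)}

/-- `ext_t(Q)`: all `t`-boundaried graphs obtainable from members of `Q` (viewed as
`0`-boundaried graphs) by `t` successive extension operations. -/
def extT (X : Type) : (t : ℕ) → Set (BLGraph X 0) → Set (BLGraph X t)
  | 0, Q => Q
  | (t+1), Q => {K | ∃ H ∈ extT X t Q, K ∈ ext1 H}

/-- `mpcs_{+t}(Q) = mpcs(ext_t(Q))`. -/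
def mpcsPlus (t : ℕ) (Q : Set (BLGraph X 0)) : Set (BLGraph X t) :=
  {K | ∃ H ∈ extT X t Q, K ∈ mpcs H}

/-- `folio_{Q,t}(H)`: the members of `mpcs_{+t}(Q)` that are boundaried labeled
minors of `H`. -/
def folioQ (Q : Set (BLGraph X 0)) (t : ℕ) (H : BLGraph X t) : Set (BLGraph X t) :=
  {P | P ∈ mpcsPlus t Q ∧ BMinor P H}

/-- Isomorphism of boundaried labeled graphs. -/
def BLIso (H K : BLGraph X t) : Prop :=
  ∃ e : H.V ≃ K.V, (∀ a b, H.G.Adj a b ↔ K.G.Adj (e a) (e b)) ∧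
    (∀ a, H.lab a = K.lab (e a)) ∧ (∀ a, H.bd a = K.bd (e a))

end BLGraph

section Aux

open BLGraph

variable {X : Type} {t : ℕ}

lemma splitBd_connected (H : BLGraph X t) (u : H.V) (S : Set H.V) (K : Set X)
    (hc : H.G.Connected) : (splitBd H u S K).G.Connected := by
  have hG : (splitBd H u S K).G = SimpleGraph.fromRel _ := rfl
  have hadj_u : (splitBd H u S K).G.Adj (Sum.inl u) (Sum.inr ()) := by
    rw [hG]; refine (SimpleGraph.fromRel_adj _ _ _).mpr ?_
    refine ⟨Sum.inl_ne_inr, Or.inl ?_⟩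
    show (H.G.Adj u u ∧ u ∈ S) ∨ u = u
    exact Or.inr rfl
  have key : ∀ (a v : H.V) (w : H.G.Walk a v), v = u →
      (splitBd H u S K).G.Reachable (Sum.inl a) (Sum.inr ()) := by
    intro a v w
    induction w with
    | nil => rintro rfl; exact hadj_u.reachable
    | @cons a b v h p ih =>
        rintro rfl
        have ih := ih rfl
        by_cases hb : b = v ∧ a ∈ S
        · refine SimpleGraph.Adj.reachable ?_
          rw [hG]; refine (SimpleGraph.fromRel_adj _ _ _).mpr ?_
          refine ⟨Sum.inl_ne_inr, Or.inl ?_⟩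
          show (H.G.Adj a v ∧ a ∈ S) ∨ a = v
          exact Or.inl ⟨hb.1 ▸ h, hb.2⟩
        · by_cases ha : a = v ∧ b ∈ S
          · refine SimpleGraph.Adj.reachable ?_
            rw [hG]; refine (SimpleGraph.fromRel_adj _ _ _).mpr ?_
            refine ⟨Sum.inl_ne_inr, Or.inl ?_⟩
            show (H.G.Adj a v ∧ a ∈ S) ∨ a = v
            exact Or.inr ha.1
          · refine (SimpleGraph.Adj.reachable ?_).trans ih
            rw [hG]; refine (SimpleGraph.fromRel_adj _ _ _).mpr ?_
            refine ⟨fun he => h.ne (Sum.inl.inj he), Or.inl ?_⟩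
            show H.G.Adj a b ∧ ¬(b = v ∧ a ∈ S) ∧ ¬(a = v ∧ b ∈ S)
            exact ⟨h, hb, ha⟩
  have reach : ∀ x : H.V ⊕ Unit, (splitBd H u S K).G.Reachable x (Sum.inr ()) := by
    rintro (a | ⟨⟩)
    · obtain ⟨w⟩ := hc.preconnected a u
      exact key a u w rfl
    · exact SimpleGraph.Reachable.refl _
  exact @SimpleGraph.Connected.mk _ _ (fun x y => (reach x).trans (reach y).symm)
    ⟨Sum.inr ()⟩

lemma ext1_connected {H : BLGraph X t} (hc : H.G.Connected) {K : BLGraph X (t+1)}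
    (hK : K ∈ ext1 H) : K.G.Connected := by
  rcases hK with rfl | ⟨v, _, rfl⟩ | ⟨u, S, Kl, _, _, _, rfl⟩
  · exact hc
  · exact hc
  · exact splitBd_connected H u S Kl hc

lemma extT_connected : ∀ {t : ℕ} {Q : Set (BLGraph X 0)},
    (∀ q ∈ Q, q.G.Connected) → ∀ {G : BLGraph X t}, G ∈ extT X t Q → G.G.Connected := by
  intro t
  induction t with
  | zero => intro Q hQ G hG; exact hQ G hG
  | succ t ih =>
      rintro Q hQ G ⟨H, hH, hG⟩
      exact ext1_connected (ih hQ hH) hG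

lemma glue_bd_none {G₁ G₂ : BLGraph X t} (h : ∀ x, (glue G₁ G₂).bd x = none) :
    (∀ a, G₁.bd a = none) ∧ ∀ b, G₂.bd b = none := by
  have h1 : ∀ a, G₁.bd a = none := fun a => h (Sum.inl a)
  refine ⟨h1, fun b => ?_⟩
  exact h (Sum.inr ⟨b, fun i _ a ha => by rw [h1 a] at ha; cases ha⟩)

lemma glueList_bd_none : ∀ (l : List (BLGraph X t)) (P : BLGraph X t),
    (∀ x, (glueList P l).bd x = none) → ∀ p ∈ P :: l, ∀ x, p.bd x = none := by
  intro l
  induction l with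
  | nil =>
      intro P h p hp x
      rw [List.mem_singleton] at hp
      subst hp
      exact h x
  | cons P' l' ih =>
      intro P h p hp
      have h' := glue_bd_none (G₁ := P) (G₂ := glueList P' l') h
      rcases List.mem_cons.mp hp with rfl | hp
      · exact h'.1
      · exact ih P' h'.2 p hp

/-- The pieceComp construction, abstracted over the defining predicate. -/
def pieceOf (H : BLGraph X t) (p : H.V → Prop) : BLGraph X t where
  V := {x : H.V // p x}
  G := SimpleGraph.fromRel
    (fun x y => H.G.Adj x.1 y.1 ∧ (H.bd x.1 = none ∨ H.bd y.1 = none))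
  lab x := {ℓ | H.bd x.1 = none ∧ ℓ ∈ H.lab x.1}
  bd x := H.bd x.1
  inj := fun x y i hx hy => Subtype.ext (H.inj _ _ i hx hy)

lemma pieceComp_eq_pieceOf (H : BLGraph X t) (c : H.V) :
    pieceComp H c = pieceOf H (fun x => x ∈ compIn H.G {y | H.bd y = none} c ∨
      (H.bd x ≠ none ∧ ∃ y ∈ compIn H.G {y | H.bd y = none} c, H.G.Adj x y)) := rfl

lemma pcs_no_bd {G : BLGraph X t} {p : BLGraph X t} (hp : p ∈ pcs G)
    (hnb : ∀ x, p.bd x = none) : ∃ c, G.bd c = none ∧ p = pieceComp G c := by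
  rcases hp with ⟨a, ha, rfl⟩ | ⟨a, ℓ, ha, _, rfl⟩ | ⟨a, b, hne, ha, _, _, rfl⟩ | ⟨c, hc, rfl⟩
  · exact absurd (hnb PUnit.unit) ha
  · exact absurd (hnb PUnit.unit) ha
  · exact absurd (hnb true) ha
  · exact ⟨c, hc, rfl⟩

lemma compIn_all {G : BLGraph X t} (hc : G.G.Connected) {c : G.V} (hcn : G.bd c = none)
    (hnb : ∀ x : (pieceComp G c).V, (pieceComp G c).bd x = none) :
    ∀ v, v ∈ compIn G.G {y | G.bd y = none} c := by
  have step : ∀ {a b : G.V}, a ∈ compIn G.G {y | G.bd y = none} c → G.G.Adj a b →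
      b ∈ compIn G.G {y | G.bd y = none} c := by
    intro a b ha hab
    have hb : G.bd b = none := by
      by_contra hb
      exact hb (hnb ⟨b, Or.inr ⟨hb, a, ha, hab.symm⟩⟩)
    exact ⟨hb, ha.2.trans (SimpleGraph.Adj.reachable (G := within G.G {y | G.bd y = none}) (show _ ∧ _ ∧ _ from ⟨ha.1, hb, hab⟩))⟩
  have key : ∀ (u v : G.V) (_ : G.G.Walk u v),
      u ∈ compIn G.G {y | G.bd y = none} c → v ∈ compIn G.G {y | G.bd y = none} c := by
    intro u v w
    induction w with
    | nil => exact id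
    | @cons u b _ h _ ih => exact fun hu => ih (step hu h)
  intro v
  obtain ⟨w⟩ := hc.preconnected c v
  exact key c v w ⟨hcn, SimpleGraph.Reachable.refl c⟩

lemma pieceComp_eq {G : BLGraph X t} {c c' : G.V}
    (hall : ∀ v, v ∈ compIn G.G {y | G.bd y = none} c)
    (hall' : ∀ v, v ∈ compIn G.G {y | G.bd y = none} c') :
    pieceComp G c = pieceComp G c' := by
  rw [pieceComp_eq_pieceOf, pieceComp_eq_pieceOf]
  exact congrArg _ (funext fun x =>
    propext (iff_of_true (Or.inl (hall x)) (Or.inl (hall' x))))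

lemma piece_iso {G : BLGraph X t} {c : G.V}
    (hall : ∀ v, v ∈ compIn G.G {y | G.bd y = none} c) :
    BLIso (pieceComp G c) G := by
  have hbd : ∀ v, G.bd v = none := fun v => (hall v).1
  have hG : (pieceComp G c).G = SimpleGraph.fromRel
      (fun x y => G.G.Adj x.1 y.1 ∧ (G.bd x.1 = none ∨ G.bd y.1 = none)) := rfl
  refine ⟨⟨Subtype.val, fun v => ⟨v, Or.inl (hall v)⟩, fun x => Subtype.ext rfl,
    fun v => rfl⟩, ?_, ?_, fun x => rfl⟩
  · intro a b
    rw [hG, SimpleGraph.fromRel_adj]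
    constructor
    · rintro ⟨_, (⟨h, _⟩ | ⟨h, _⟩)⟩
      · exact h
      · exact h.symm
    · intro h
      exact ⟨fun he => h.ne (congrArg Subtype.val he), Or.inl ⟨h, Or.inl (hbd a.1)⟩⟩
  · intro a
    have hl : (pieceComp G c).lab a = {ℓ | G.bd a.1 = none ∧ ℓ ∈ G.lab a.1} := rfl
    rw [hl]
    ext ℓ
    simp [hbd a.1]
    exact Iff.rfl

end Aux

open BLGraph in
/-- every `H ∈ mpcs_{+t}(Q)` (for a set `Q` of connected labeled
graphs) either contains a boundary vertex or is (up to isomorphism, as graphs in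
`mpcs` are considered up to isomorphism) a member of `ext_t(Q)`. -/
theorem stmt10 {X : Type} {t : ℕ} (Q : Set (BLGraph X 0)) (hQ : ∀ q ∈ Q, q.G.Connected)
    (H : BLGraph X t) (hH : H ∈ mpcsPlus t Q) :
    (∃ a, H.bd a ≠ none) ∨ ∃ K ∈ extT X t Q, BLIso H K := by
  by_cases hbd : ∃ a, H.bd a ≠ none
  · exact Or.inl hbd
  · right
    push_neg at hbd
    obtain ⟨G, hG, P, l, hmem, hnd, rfl⟩ := hH
    have hGc := extT_connected hQ hG
    have hpieces := glueList_bd_none l P hbd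
    have hP := hpieces P (List.mem_cons_self)
    obtain ⟨c, hcn, hPc⟩ := pcs_no_bd (hmem P (List.mem_cons_self)) hP
    have hallc := compIn_all hGc hcn (hPc ▸ hP)
    cases l with
    | nil => exact ⟨G, hG, hPc ▸ piece_iso hallc⟩
    | cons P' l' =>
        exfalso
        have hP' := hpieces P' (by simp)
        obtain ⟨c', hcn', hPc'⟩ := pcs_no_bd (hmem P' (by simp)) hP'
        have hallc' := compIn_all hGc hcn' (hPc' ▸ hP')
        have hPP' : P = P' := by
          rw [hPc, hPc']
          exact pieceComp_eq hallc hallc'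
        exact (List.nodup_cons.mp hnd).1 (hPP' ▸ List.mem_cons_self)
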